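/- Let k ≥ 1, n ≥ 2k and d ≤ n be natural numbers. Then the sum, over all primitive polynomials p of degree k over GF(2), of the number of codewords c ∈ S(p,n) with 1 ≤ w(c) ≤ d is at most Σ_{j=1}^{d} C(n,j), the total number of nonzero vectors in GF(2)^n of Hamming weight at most d (because nonzero codewords of distinct truncated PR codes of dimension k and length n ≥ 2k are distinct vectors). -/

import Mathlib

/-- The truncated primitive rateless (PR) code `S(p,n)` for a polynomial `p` of degree `k`
over `GF(2)`: the set of vectors `c ∈ GF(2)^n` satisfying the linear recurrence
`∑_{i=0}^k p_i c_{j+i} = 0` for every `j` with `0 ≤ j ≤ n - k - 1`. -/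
def PRcode (k : ℕ) (p : Polynomial (ZMod 2)) (n : ℕ) : Set (Fin n → ZMod 2) :=
  {c | ∀ j : ℕ, j + k < n →
    ∑ i ∈ Finset.range (k + 1), p.coeff i * (if h : j + i < n then c ⟨j + i, h⟩ else 0) = 0}

/-- `p` is a primitive polynomial of degree `k` over `GF(2)`: it is the minimal polynomial of
some element `α` of `GF(2^k)` of multiplicative order `2^k - 1`. -/
def IsPrimitivePoly (k : ℕ) (p : Polynomial (ZMod 2)) : Prop :=
  ∃ α : GaloisField 2 k, orderOf α = 2 ^ k - 1 ∧ p = minpoly (ZMod 2) α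
/-- The (finite) set of primitive polynomials of degree `k` over `GF(2)`, as a `Finset`. -/
noncomputable def primPolyFinset (k : ℕ) : Finset (Polynomial (ZMod 2)) :=
  Set.Finite.toFinset (s := {p : Polynomial (ZMod 2) | IsPrimitivePoly k p})
    (Set.Finite.subset (Set.finite_range fun α : GaloisField 2 k => minpoly (ZMod 2) α)
      (by rintro p ⟨α, -, rfl⟩; exact ⟨α, rfl⟩))

section Aux

open Polynomial Finset IntermediateField

/-- Apply the recurrence operator of `f` to a sequence at position `j`. -/
noncomputable def Dop (f : Polynomial (ZMod 2)) (c : ℕ → ZMod 2) (j : ℕ) : ZMod 2 :=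
  ∑ i ∈ Finset.range (f.natDegree + 1), f.coeff i * c (j + i)

lemma Dop_eq (f : Polynomial (ZMod 2)) (c : ℕ → ZMod 2) (j N : ℕ) (hN : f.natDegree < N) :
    Dop f c j = ∑ i ∈ Finset.range N, f.coeff i * c (j + i) := by
  unfold Dop
  apply Finset.sum_subset
  · intro i hi
    simp only [Finset.mem_range] at *; omega
  · intro i hi hni
    simp only [Finset.mem_range, not_lt] at hni
    rw [f.coeff_eq_zero_of_natDegree_lt (by omega), zero_mul]

lemma Dop_add (f g : Polynomial (ZMod 2)) (c : ℕ → ZMod 2) (j : ℕ) :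
    Dop (f + g) c j = Dop f c j + Dop g c j := by
  have h1 : f.natDegree < max f.natDegree g.natDegree + 1 := by omega
  have h2 : g.natDegree < max f.natDegree g.natDegree + 1 := by omega
  have h3 : (f + g).natDegree < max f.natDegree g.natDegree + 1 :=
    lt_of_le_of_lt (Polynomial.natDegree_add_le f g) (by omega)
  rw [Dop_eq _ _ _ _ h1, Dop_eq _ _ _ _ h2, Dop_eq _ _ _ _ h3, ← Finset.sum_add_distrib]
  apply Finset.sum_congr rfl
  intro i _
  rw [Polynomial.coeff_add, add_mul]

lemma Dop_C (a : ZMod 2) (c : ℕ → ZMod 2) (j : ℕ) : Dop (Polynomial.C a) c j = a * c j := by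
  unfold Dop
  rw [Polynomial.natDegree_C]
  simp

lemma Dop_C_mul (a : ZMod 2) (f : Polynomial (ZMod 2)) (c : ℕ → ZMod 2) (j : ℕ) :
    Dop (Polynomial.C a * f) c j = a * Dop f c j := by
  rw [Dop_eq _ _ _ (f.natDegree + 1) (lt_of_le_of_lt (Polynomial.natDegree_C_mul_le a f) (by omega)),
    Dop, Finset.mul_sum]
  apply Finset.sum_congr rfl
  intro i _
  rw [Polynomial.coeff_C_mul, mul_assoc]

lemma Dop_X_mul (f : Polynomial (ZMod 2)) (c : ℕ → ZMod 2) (j : ℕ) :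
    Dop (Polynomial.X * f) c j = Dop f c (j + 1) := by
  have hd : (Polynomial.X * f).natDegree < f.natDegree + 2 :=
    lt_of_le_of_lt (Polynomial.natDegree_mul_le)
      (by rw [Polynomial.natDegree_X]; omega)
  rw [Dop_eq _ _ _ (f.natDegree + 2) hd, Finset.sum_range_succ', Dop]
  have h0 : (Polynomial.X * f).coeff 0 = 0 := by
    rw [Polynomial.mul_coeff_zero, Polynomial.coeff_X_zero, zero_mul]
  rw [h0, zero_mul, add_zero]
  apply Finset.sum_congr rfl
  intro i _
  rw [Polynomial.coeff_X_mul]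
  ring_nf

lemma Dop_mul (f g : Polynomial (ZMod 2)) (c : ℕ → ZMod 2) (j : ℕ) :
    Dop (f * g) c j = Dop f (fun m => Dop g c m) j := by
  induction f using Polynomial.induction_on generalizing j with
  | C a => rw [Dop_C_mul, Dop_C]
  | add f1 f2 h1 h2 => rw [add_mul, Dop_add, Dop_add, h1, h2]
  | monomial m a ih =>
      have e1 : Polynomial.C a * Polynomial.X ^ (m + 1) * g
          = Polynomial.X * (Polynomial.C a * Polynomial.X ^ m * g) := by ring
      have e2 : Polynomial.C a * Polynomial.X ^ (m + 1)
          = Polynomial.X * (Polynomial.C a * Polynomial.X ^ m) := by ring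
      rw [e1, Dop_X_mul, ih, e2, Dop_X_mul]

lemma Dop_one (c : ℕ → ZMod 2) (j : ℕ) : Dop 1 c j = c j := by
  have := Dop_C 1 c j
  rwa [Polynomial.C_1, one_mul] at this

lemma Dop_zero' (f : Polynomial (ZMod 2)) (c : ℕ → ZMod 2) (hc : ∀ m, c m = 0) (j : ℕ) :
    Dop f c j = 0 := by
  unfold Dop
  apply Finset.sum_eq_zero
  intro i _
  rw [hc, mul_zero]

/-- If a sequence satisfies the `p`-recurrence everywhere and starts with `k` zeros, it is zero. -/
lemma zero_of_rec (p : Polynomial (ZMod 2)) (k : ℕ) (hm : p.Monic) (hdeg : p.natDegree = k)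
    (e : ℕ → ZMod 2) (hrec : ∀ j, Dop p e j = 0) (h0 : ∀ j < k, e j = 0) :
    ∀ j, e j = 0 := by
  intro j
  induction j using Nat.strong_induction_on with
  | _ j ih =>
    by_cases hj : j < k
    · exact h0 j hj
    · push_neg at hj
      have hr := hrec (j - k)
      unfold Dop at hr
      rw [hdeg, Finset.sum_range_succ] at hr
      have hkc : p.coeff k = 1 := by
        have := hm.coeff_natDegree
        rwa [hdeg] at this
      have hjk : j - k + k = j := by omega
      rw [hkc, one_mul, hjk] at hr
      have hz : ∑ i ∈ Finset.range k, p.coeff i * e (j - k + i) = 0 := by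
        apply Finset.sum_eq_zero
        intro i hi
        rw [Finset.mem_range] at hi
        rw [ih (j - k + i) (by omega), mul_zero]
      rw [hz, zero_add] at hr
      exact hr

/-- Extension of a finite vector to an infinite sequence via the `p`-recurrence. -/
noncomputable def extSeq (k n : ℕ) (p : Polynomial (ZMod 2)) (c : Fin n → ZMod 2) : ℕ → ZMod 2
  | j =>
    if h : j < n then c ⟨j, h⟩
    else if _ : j < k then 0
    else ∑ i ∈ (Finset.range k).attach,
        p.coeff i.1 * extSeq k n p c (j - k + i.1)
  termination_by j => j
  decreasing_by
    have := Finset.mem_range.mp i.2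
    omega

lemma extSeq_lt (k n : ℕ) (p : Polynomial (ZMod 2)) (c : Fin n → ZMod 2) (j : ℕ) (h : j < n) :
    extSeq k n p c j = c ⟨j, h⟩ := by
  rw [extSeq]; simp [h]

lemma extSeq_ge (k n : ℕ) (p : Polynomial (ZMod 2)) (c : Fin n → ZMod 2) (j : ℕ)
    (h : ¬ j < n) (hk : ¬ j < k) :
    extSeq k n p c j = ∑ i ∈ Finset.range k, p.coeff i * extSeq k n p c (j - k + i) := by
  rw [extSeq]
  simp only [h, hk, dif_neg, not_false_iff]
  rw [← Finset.sum_attach (Finset.range k) (fun i => p.coeff i * extSeq k n p c (j - k + i))]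

lemma extSeq_rec (k n : ℕ) (p : Polynomial (ZMod 2)) (c : Fin n → ZMod 2)
    (hm : p.Monic) (hdeg : p.natDegree = k)
    (hc : c ∈ PRcode k p n) : ∀ j, Dop p (extSeq k n p c) j = 0 := by
  intro j
  unfold Dop
  rw [hdeg]
  by_cases hjn : j + k < n
  · have := hc j hjn
    rw [← this]
    apply Finset.sum_congr rfl
    intro i hi
    rw [Finset.mem_range] at hi
    have hin : j + i < n := by omega
    rw [extSeq_lt k n p c (j + i) hin]
    simp [hin]
  · push_neg at hjn
    have h1 : ¬ j + k < n := by omega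
    have h2 : ¬ j + k < k := by omega
    have hrec := extSeq_ge k n p c (j + k) h1 h2
    rw [Finset.sum_range_succ]
    have hkc : p.coeff k = 1 := by have := hm.coeff_natDegree; rwa [hdeg] at this
    rw [hkc, one_mul, hrec]
    have heq : ∑ i ∈ Finset.range k, p.coeff i * extSeq k n p c (j + k - k + i)
        = ∑ i ∈ Finset.range k, p.coeff i * extSeq k n p c (j + i) := by
      apply Finset.sum_congr rfl; intro i _; congr 2; omega
    rw [heq]
    have h2' : ∀ x : ZMod 2, x + x = 0 := by decide
    exact h2' _

lemma primitive_facts (k : ℕ) (hk : 1 ≤ k) (p : Polynomial (ZMod 2))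
    (hp : IsPrimitivePoly k p) : p.Monic ∧ Irreducible p ∧ p.natDegree = k := by
  obtain ⟨α, hord, rfl⟩ := hp
  have hint : IsIntegral (ZMod 2) α := IsIntegral.of_finite _ _
  refine ⟨minpoly.monic hint, minpoly.irreducible hint, ?_⟩
  set m := (minpoly (ZMod 2) α).natDegree with hm
  have hmle : m ≤ k := by
    have := minpoly.natDegree_le (A := ZMod 2) α
    rwa [GaloisField.finrank 2 (by omega : k ≠ 0)] at this
  have hα0 : α ≠ 0 := by
    intro h
    have h1 : α ^ (2 ^ k - 1) = 1 := by rw [← hord]; exact pow_orderOf_eq_one α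
    rw [h] at h1
    have h2 : (2:ℕ) ^ k - 1 ≠ 0 := by
      have : 2 ≤ 2 ^ k := Nat.one_lt_two_pow (by omega)
      omega
    rw [zero_pow h2] at h1
    exact zero_ne_one h1
  have hfr : Module.finrank (ZMod 2) (ZMod 2)⟮α⟯ = m :=
    IntermediateField.adjoin.finrank hint
  haveI : Fintype ((ZMod 2)⟮α⟯) := Fintype.ofFinite _
  have hcard : Fintype.card ((ZMod 2)⟮α⟯) = 2 ^ m := by
    have := Module.card_eq_pow_finrank (K := ZMod 2) (V := (ZMod 2)⟮α⟯)
    rwa [ZMod.card, hfr] at this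
  set β := IntermediateField.AdjoinSimple.gen (ZMod 2) α with hβ
  have hβα : (algebraMap ((ZMod 2)⟮α⟯) (GaloisField 2 k)) β = α :=
    IntermediateField.AdjoinSimple.algebraMap_gen (ZMod 2) α
  have hβ0 : β ≠ 0 := by
    intro h
    apply hα0
    rw [← hβα, h, map_zero]
  have hordβ : orderOf β = 2 ^ k - 1 := by
    rw [← hord]
    have hinj : Function.Injective (algebraMap ((ZMod 2)⟮α⟯) (GaloisField 2 k)) :=
      RingHom.injective _
    have := orderOf_injective
      ((algebraMap ((ZMod 2)⟮α⟯) (GaloisField 2 k)) : (ZMod 2)⟮α⟯ →* GaloisField 2 k) hinj β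
    rw [← this]
    norm_cast
  have hpow : β ^ (2 ^ m - 1) = 1 := by
    have := FiniteField.pow_card_sub_one_eq_one β hβ0
    rwa [hcard] at this
  have hdvd : (2 ^ k - 1) ∣ (2 ^ m - 1) := by
    rw [← hordβ]
    exact orderOf_dvd_of_pow_eq_one hpow
  have hm1 : 1 ≤ m := minpoly.natDegree_pos hint
  have hpos : 0 < 2 ^ m - 1 := by
    have : 2 ≤ 2 ^ m := Nat.one_lt_two_pow (by omega)
    omega
  have hle := Nat.le_of_dvd hpos hdvd
  have h2k : 2 ^ k ≤ 2 ^ m := by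
    have hk2 : 1 ≤ 2 ^ k := Nat.one_le_two_pow
    have hm2 : 1 ≤ 2 ^ m := Nat.one_le_two_pow
    omega
  have : k ≤ m := (Nat.pow_le_pow_iff_right (by omega)).mp h2k
  omega

/-- Nonzero codewords of distinct primitive PR codes are distinct: a common codeword is zero. -/
lemma common_codeword_zero (k n : ℕ) (hk : 1 ≤ k) (hn : 2 * k ≤ n)
    (p q : Polynomial (ZMod 2)) (hpq : p ≠ q)
    (hp : IsPrimitivePoly k p) (hq : IsPrimitivePoly k q)
    (c : Fin n → ZMod 2) (hcp : c ∈ PRcode k p n) (hcq : c ∈ PRcode k q n) :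
    ∀ i, c i = 0 := by
  obtain ⟨hpm, hpi, hpd⟩ := primitive_facts k hk p hp
  obtain ⟨hqm, hqi, hqd⟩ := primitive_facts k hk q hq
  -- coprimality
  have hnd : ¬ p ∣ q := by
    intro h
    exact hpq (Polynomial.eq_of_monic_of_associated hpm hqm (hpi.associated_of_dvd hqi h))
  have hcop : IsCoprime p q := hpi.coprime_iff_not_dvd.mpr hnd
  obtain ⟨a, b, hab⟩ := hcop
  set e := extSeq k n p c with he
  have hpe : ∀ j, Dop p e j = 0 := extSeq_rec k n p c hpm hpd hcp
  -- Dop q e vanishes on the first k positions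
  have hq0 : ∀ j < k, Dop q e j = 0 := by
    intro j hj
    have hjn : j + k < n := by omega
    have := hcq j hjn
    rw [← this]
    unfold Dop
    rw [hqd]
    simp only [he]
    apply Finset.sum_congr rfl
    intro i hi
    rw [Finset.mem_range] at hi
    have hin : j + i < n := by omega
    rw [extSeq_lt k n p c (j + i) hin]
    simp [hin]
  -- Dop q e satisfies the p recurrence everywhere
  have hqp : ∀ j, Dop p (fun m => Dop q e m) j = 0 := by
    intro j
    rw [← Dop_mul p q e j, mul_comm, Dop_mul q p e j]
    exact Dop_zero' q _ hpe j
  have hqe : ∀ j, Dop q e j = 0 :=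
    zero_of_rec p k hpm hpd (fun m => Dop q e m) hqp hq0
  -- Bezout: every entry of e is zero
  have hez : ∀ j, e j = 0 := by
    intro j
    have h1 : e j = Dop (a * p + b * q) e j := by rw [hab, Dop_one]
    rw [h1, Dop_add, Dop_mul, Dop_mul]
    have hza : Dop a (fun m => Dop p e m) j = 0 := Dop_zero' a _ hpe j
    have hzb : Dop b (fun m => Dop q e m) j = 0 := Dop_zero' b _ hqe j
    rw [hza, hzb, add_zero]
  intro i
  have h := hez i.1
  rw [he] at h
  rwa [extSeq_lt k n p c i.1 i.2, Fin.eta] at h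

/-- The number of vectors of `(Fin n → ZMod 2)` of Hamming weight `j` is `n.choose j`. -/
lemma card_hammingNorm_eq (n j : ℕ) :
    (Finset.univ.filter (fun c : Fin n → ZMod 2 => hammingNorm c = j)).card = n.choose j := by
  classical
  have hh : n.choose j = (Finset.powersetCard j (Finset.univ : Finset (Fin n))).card := by
    rw [Finset.card_powersetCard, Finset.card_univ, Fintype.card_fin]
  rw [hh]
  apply Finset.card_bij (fun c _ => Finset.univ.filter (fun i => c i ≠ 0))
  · intro c hc
    rw [Finset.mem_filter] at hc
    rw [Finset.mem_powersetCard]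
    exact ⟨Finset.subset_univ _, hc.2⟩
  · intro c1 h1 c2 h2 heq
    funext i
    have h01 : ∀ x : ZMod 2, x ≠ 0 → x = 1 := by decide
    by_cases hi : c1 i = 0
    · have : i ∉ Finset.univ.filter (fun i => c1 i ≠ 0) := by simp [hi]
      rw [heq] at this
      simp only [Finset.mem_filter, Finset.mem_univ, true_and, not_not] at this
      rw [hi, this]
    · have : i ∈ Finset.univ.filter (fun i => c1 i ≠ 0) := by simp [hi]
      rw [heq] at this
      simp only [Finset.mem_filter, Finset.mem_univ, true_and] at this
      rw [h01 _ hi, h01 _ this]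
  · intro s hs
    rw [Finset.mem_powersetCard] at hs
    refine ⟨fun i => if i ∈ s then 1 else 0, ?_, ?_⟩
    · rw [Finset.mem_filter]
      refine ⟨Finset.mem_univ _, ?_⟩
      unfold hammingNorm
      rw [← hs.2]
      congr 1
      ext i
      by_cases hi : i ∈ s <;> simp [hi]
    · ext i
      by_cases hi : i ∈ s <;> simp [hi]

end Aux

theorem stmt17 (k n d : ℕ) (hk : 1 ≤ k) (hn : 2 * k ≤ n) (hd : d ≤ n) :
    (∑ p ∈ primPolyFinset k,
        {c : Fin n → ZMod 2 |
          c ∈ PRcode k p n ∧ 1 ≤ hammingNorm c ∧ hammingNorm c ≤ d}.ncard) ≤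
      ∑ j ∈ Finset.Icc 1 d, Nat.choose n j := by
  classical
  set A : Polynomial (ZMod 2) → Finset (Fin n → ZMod 2) := fun p =>
    Set.Finite.toFinset (Set.toFinite
      {c : Fin n → ZMod 2 | c ∈ PRcode k p n ∧ 1 ≤ hammingNorm c ∧ hammingNorm c ≤ d}) with hA
  have hncard : ∀ p, {c : Fin n → ZMod 2 |
      c ∈ PRcode k p n ∧ 1 ≤ hammingNorm c ∧ hammingNorm c ≤ d}.ncard = (A p).card := by
    intro p
    rw [hA]
    exact Set.ncard_eq_toFinset_card _ _
  calc (∑ p ∈ primPolyFinset k,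
        {c : Fin n → ZMod 2 |
          c ∈ PRcode k p n ∧ 1 ≤ hammingNorm c ∧ hammingNorm c ≤ d}.ncard)
      = ∑ p ∈ primPolyFinset k, (A p).card := by
        apply Finset.sum_congr rfl; intro p _; exact hncard p
    _ = ((primPolyFinset k).biUnion A).card := by
        rw [Finset.card_biUnion]
        intro p hp q hq hpq
        rw [Function.onFun, Finset.disjoint_left]
        intro c hcp hcq
        rw [hA, Set.Finite.mem_toFinset] at hcp hcq
        have hprim_p : IsPrimitivePoly k p := by
          have := (Set.Finite.mem_toFinset _).mp hp
          exact this
        have hprim_q : IsPrimitivePoly k q := by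
          have := (Set.Finite.mem_toFinset _).mp hq
          exact this
        have hz := common_codeword_zero k n hk hn p q hpq hprim_p hprim_q c hcp.1 hcq.1
        have h0 : hammingNorm c = 0 := by
          unfold hammingNorm
          rw [Finset.card_eq_zero]
          ext i
          simp [hz i]
        have h1 := hcp.2.1
        omega
    _ ≤ (Finset.univ.filter (fun c : Fin n → ZMod 2 =>
          1 ≤ hammingNorm c ∧ hammingNorm c ≤ d)).card := by
        apply Finset.card_le_card
        intro c hc
        rw [Finset.mem_biUnion] at hc
        obtain ⟨p, _, hcp⟩ := hc
        rw [hA, Set.Finite.mem_toFinset] at hcp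
        rw [Finset.mem_filter]
        exact ⟨Finset.mem_univ _, hcp.2⟩
    _ = ∑ j ∈ Finset.Icc 1 d, Nat.choose n j := by
        rw [Finset.card_eq_sum_card_fiberwise
          (f := fun c : Fin n → ZMod 2 => hammingNorm c) (t := Finset.Icc 1 d)
          (by intro c hc; rw [Finset.mem_coe, Finset.mem_filter] at hc; rw [Finset.mem_coe, Finset.mem_Icc]; exact hc.2)]
        apply Finset.sum_congr rfl
        intro j hj
        rw [Finset.mem_Icc] at hj
        rw [← card_hammingNorm_eq n j]
        congr 1
        rw [Finset.filter_filter]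
        apply Finset.filter_congr
        intro c _
        constructor
        · intro h; exact h.2
        · intro hcj
          exact ⟨⟨by rw [hcj]; exact hj.1, by rw [hcj]; exact hj.2⟩, hcj⟩
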